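/- Let f : [0,∞) → ℝ be a continuous superquadratic function, A, B positive bounded operators on a Hilbert space H, and x, y ∈ H with ‖x‖² − ‖y‖² = 1 and ⟨Ax,x⟩ − ⟨By,y⟩ ≥ 0. Then f(⟨Ax,x⟩ − ⟨By,y⟩) ≥ ‖x‖² f(⟨Ax,x⟩/‖x‖²) − ⟨f(B)y,y⟩ + ⟨f(|B − (1/‖y‖²)⟨By,y⟩·I|)y,y⟩ + f(‖y‖² |⟨Ax,x⟩/‖x‖² − ⟨By,y⟩/‖y‖²|) + ‖y‖² f(|⟨Ax,x⟩/‖x‖² − ⟨By,y⟩/‖y‖²|). -/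

import Mathlib

set_option maxHeartbeats 1000000

open scoped InnerProductSpace

lemma inner_re_mono_of_le {H : Type*} [NormedAddCommGroup H] [InnerProductSpace ℂ H]
    [CompleteSpace H] (T S : H →L[ℂ] H) (h : T ≤ S) (y : H) :
    RCLike.re ⟪T y, y⟫_ℂ ≤ RCLike.re ⟪S y, y⟫_ℂ := by
  have h' := (ContinuousLinearMap.le_def T S).mp h
  have := h'.re_inner_nonneg_left y
  simp only [ContinuousLinearMap.sub_apply, inner_sub_left, map_sub] at this
  linarith

lemma inner_re_real_smul_one {H : Type*} [NormedAddCommGroup H] [InnerProductSpace ℂ H]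
    [CompleteSpace H] (c : ℝ) (y : H) :
    RCLike.re ⟪(c • (1 : H →L[ℂ] H)) y, y⟫_ℂ = c * ‖y‖^2 := by
  rw [ContinuousLinearMap.smul_apply, ContinuousLinearMap.one_apply,
    show c • y = (c:ℂ) • y from (Complex.coe_smul c y).symm, inner_smul_left]
  simp [inner_self_eq_norm_sq]
  left; rw [← Complex.ofReal_pow, Complex.ofReal_re]

lemma inner_re_real_smul {H : Type*} [NormedAddCommGroup H] [InnerProductSpace ℂ H]
    [CompleteSpace H] (c : ℝ) (T : H →L[ℂ] H) (y : H) :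
    RCLike.re ⟪(c • T) y, y⟫_ℂ = c * RCLike.re ⟪T y, y⟫_ℂ := by
  rw [ContinuousLinearMap.smul_apply,
    show c • T y = (c:ℂ) • T y from (Complex.coe_smul c (T y)).symm, inner_smul_left]
  simp

theorem external_jensen_operator {H : Type*} [NormedAddCommGroup H]
    [InnerProductSpace ℂ H] [CompleteSpace H]
    (f : ℝ → ℝ) (hf_cont : ContinuousOn f (Set.Ici (0:ℝ)))
    (hf : ∀ a : ℝ, 0 ≤ a → ∃ C : ℝ, ∀ b : ℝ, 0 ≤ b →
      f b ≥ f a + C * (b - a) + f |b - a|)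
    (A B : H →L[ℂ] H) (hA : 0 ≤ A) (hB : 0 ≤ B)
    (x y : H) (hy : y ≠ 0) (hxy : ‖x‖^2 - ‖y‖^2 = 1)
    (hpos : 0 ≤ RCLike.re ⟪A x, x⟫_ℂ - RCLike.re ⟪B y, y⟫_ℂ) :
    f (RCLike.re ⟪A x, x⟫_ℂ - RCLike.re ⟪B y, y⟫_ℂ)
      ≥ ‖x‖^2 * f (RCLike.re ⟪A x, x⟫_ℂ / ‖x‖^2)
        - RCLike.re ⟪(cfc f B) y, y⟫_ℂ
        + RCLike.re ⟪(cfc f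
            (cfc (fun s : ℝ => |s|)
              (B - (((1/‖y‖^2) * RCLike.re ⟪B y, y⟫_ℂ : ℝ) : ℂ) • (1 : H →L[ℂ] H)))) y, y⟫_ℂ
        + f (‖y‖^2 * |RCLike.re ⟪A x, x⟫_ℂ / ‖x‖^2 - RCLike.re ⟪B y, y⟫_ℂ / ‖y‖^2|)
        + ‖y‖^2 * f (|RCLike.re ⟪A x, x⟫_ℂ / ‖x‖^2 - RCLike.re ⟪B y, y⟫_ℂ / ‖y‖^2|) := by
  set α := RCLike.re ⟪A x, x⟫_ℂ with hαdef
  set β := RCLike.re ⟪B y, y⟫_ℂ with hβdef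
  have hs : (0:ℝ) < ‖y‖^2 := pow_pos (norm_pos_iff.mpr hy) 2
  have ht : (0:ℝ) < ‖x‖^2 := by nlinarith
  have hβ0 : 0 ≤ β := ((ContinuousLinearMap.nonneg_iff_isPositive B).mp hB).re_inner_nonneg_left y
  have hα0 : 0 ≤ α := ((ContinuousLinearMap.nonneg_iff_isPositive A).mp hA).re_inner_nonneg_left x
  set μ := (1/‖y‖^2) * β with hμdef
  set ν := α / ‖x‖^2 with hνdef
  have hμ0 : 0 ≤ μ := mul_nonneg (by positivity) hβ0
  have hν0 : 0 ≤ ν := div_nonneg hα0 ht.le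
  have hβμ : β = μ * ‖y‖^2 := by
    rw [hμdef, one_div, mul_comm _ β, mul_assoc, inv_mul_cancel₀ hs.ne', mul_one]
  have hβν : β / ‖y‖^2 = μ := by rw [hμdef]; ring
  obtain ⟨Cν, hCν⟩ := hf ν hν0
  obtain ⟨Cμ, hCμ⟩ := hf μ hμ0
  -- Operator part
  have hBsa : IsSelfAdjoint B :=
    ((ContinuousLinearMap.nonneg_iff_isPositive B).mp hB).isSelfAdjoint
  have hspec : ∀ z ∈ spectrum ℝ B, (0:ℝ) ≤ z := fun z hz => spectrum_nonneg_of_nonneg hB hz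
  have hfB : ContinuousOn f (spectrum ℝ B) := hf_cont.mono (fun z hz => hspec z hz)
  have habs : Continuous (fun s : ℝ => |s - μ|) := by fun_prop
  have hgB : ContinuousOn (fun s : ℝ => f |s - μ|) (spectrum ℝ B) :=
    hf_cont.comp habs.continuousOn (fun z _ => Set.mem_Ici.mpr (abs_nonneg _))
  have hsm : ((μ : ℂ) • (1 : H →L[ℂ] H)) = μ • 1 := by
    rw [show (μ : ℂ) = algebraMap ℝ ℂ μ from rfl, algebraMap_smul]
  have hD : cfc (fun s : ℝ => s - μ) B = B - (μ:ℂ) • 1 := by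
    rw [cfc_sub (fun s : ℝ => s) (fun _ => μ) B (by fun_prop) (by fun_prop), cfc_id' ℝ B,
      cfc_const μ B, Algebra.algebraMap_eq_smul_one, hsm]
  have hComp1 : cfc (fun s : ℝ => |s|) (B - (μ:ℂ) • 1) = cfc (fun s : ℝ => |s - μ|) B := by
    rw [← hD, ← cfc_comp' (fun s : ℝ => |s|) (fun s : ℝ => s - μ) B
      (continuous_abs.continuousOn) (by fun_prop) hBsa]
  have hComp2 : cfc f (cfc (fun s : ℝ => |s|) (B - (μ:ℂ) • 1))
      = cfc (fun s : ℝ => f |s - μ|) B := by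
    rw [hComp1, ← cfc_comp' f (fun s : ℝ => |s - μ|) B
      (hf_cont.mono (by rintro z ⟨w, -, rfl⟩; exact Set.mem_Ici.mpr (abs_nonneg _))) habs.continuousOn hBsa]
  set G := cfc (fun s : ℝ => f |s - μ|) B with hGdef
  have hcontLHS : ContinuousOn (fun s : ℝ => f μ + (Cμ * (s - μ) + f |s - μ|))
      (spectrum ℝ B) := continuousOn_const.add ((by fun_prop : Continuous
        (fun s : ℝ => Cμ * (s - μ))).continuousOn.add hgB)
  have hOp : cfc (fun s : ℝ => f μ + (Cμ * (s - μ) + f |s - μ|)) B ≤ cfc f B :=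
    cfc_mono (fun z hz => by have := hCμ z (hspec z hz); linarith) hcontLHS hfB
  have hSplit : cfc (fun s : ℝ => f μ + (Cμ * (s - μ) + f |s - μ|)) B
      = (f μ) • (1 : H →L[ℂ] H) + (Cμ • (B - (μ:ℂ) • 1) + G) := by
    rw [cfc_add (a := B) (fun _ => f μ) (fun s : ℝ => Cμ * (s - μ) + f |s - μ|) (by fun_prop)
        ((by fun_prop : Continuous (fun s : ℝ => Cμ * (s - μ))).continuousOn.add hgB),
      cfc_add (a := B) (fun s : ℝ => Cμ * (s - μ)) (fun s : ℝ => f |s - μ|) (by fun_prop) hgB,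
      cfc_const (f μ) B, cfc_const_mul Cμ (fun s : ℝ => s - μ) B (by fun_prop), hD,
      Algebra.algebraMap_eq_smul_one, hGdef]
  have hIneq := inner_re_mono_of_le _ _ hOp y
  rw [hSplit] at hIneq
  have hDy : RCLike.re ⟪(B - (μ:ℂ) • 1) y, y⟫_ℂ = 0 := by
    rw [hsm]
    simp only [ContinuousLinearMap.sub_apply, inner_sub_left, map_sub]
    rw [inner_re_real_smul_one]
    rw [← hβdef]; nlinarith [hβμ]
  have hExpand : RCLike.re ⟪((f μ) • (1 : H →L[ℂ] H) + (Cμ • (B - (μ:ℂ) • 1) + G)) y, y⟫_ℂ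
      = f μ * ‖y‖^2 + (Cμ * RCLike.re ⟪(B - (μ:ℂ) • 1) y, y⟫_ℂ + RCLike.re ⟪G y, y⟫_ℂ) := by
    simp only [ContinuousLinearMap.add_apply, inner_add_left, map_add]
    rw [inner_re_real_smul_one, inner_re_real_smul]
  rw [hExpand, hDy] at hIneq
  -- hIneq : f μ * ‖y‖^2 + (Cμ * 0 + re⟪G y,y⟫) ≤ re⟪cfc f B y,y⟫
  rw [hComp2, hβν]
  -- scalar part
  have hα : α = ν * ‖x‖^2 := by rw [hνdef, div_mul_cancel₀ _ ht.ne']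
  have e1 : (α - β) - ν = ‖y‖^2 * (ν - μ) := by nlinarith [hα, hβμ]
  have h1 := hCν (α - β) hpos
  rw [e1, abs_mul, abs_of_nonneg hs.le] at h1
  have h2 := hCν μ hμ0
  rw [abs_sub_comm] at h2
  have h2' : ‖y‖^2 * (Cν * (μ - ν)) ≤ ‖y‖^2 * (f μ - f ν - f |ν - μ|) := by
    apply mul_le_mul_of_nonneg_left _ hs.le
    linarith
  have e2 : Cν * (‖y‖^2 * (ν - μ)) = -(‖y‖^2 * (Cν * (μ - ν))) := by ring
  have e3 : ‖x‖^2 * f ν = f ν + ‖y‖^2 * f ν := by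
    have h4 : ‖x‖^2 = 1 + ‖y‖^2 := by linarith
    rw [h4]; ring
  linarith [hIneq, h1, h2', e2, e3]
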